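/- Let P be a dag with source set S and let T be a dag tree decomposition of P. If B is a node of T with children B_1,...,B_l, then for all i ≠ j, the vertex sets reachable from the down-closures of B_i and B_j intersect only inside the set reachable from B: V_P(B̄_i) ∩ V_P(B̄_j) ⊆ V_P(B). -/

import Mathlib

/-- A source of a digraph (relation `r`): a vertex with no incoming arc. -/
def IsSource {V : Type*} (r : V → V → Prop) (v : V) : Prop := ∀ u, ¬ r u v

/-- A digraph is acyclic if it has no directed cycle. -/
def DigraphAcyclic {V : Type*} (r : V → V → Prop) : Prop :=
  ∀ v, ¬ Relation.TransGen r v v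

/-- `r` is an orientation of the simple graph `G`: every edge gets exactly one direction. -/
def IsOrientationOf {V : Type*} (G : SimpleGraph V) (r : V → V → Prop) : Prop :=
  (∀ u v, G.Adj u v ↔ (r u v ∨ r v u)) ∧ ∀ u v, r u v → ¬ r v u

/-- The set of vertices of the digraph `r` reachable from the vertex set `X`. -/
def Reach {V : Type*} (r : V → V → Prop) (X : Set V) : Set V :=
  {v | ∃ u ∈ X, Relation.ReflTransGen r u v}

/-- A dag tree decomposition of the dag `r`: a tree `T` whose nodes carry bags of
sources of `r`, covering all sources, such that whenever a node `i` lies on the tree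
path between nodes `j` and `k`, the sets reachable from the bags of `j` and `k`
intersect only inside the set reachable from the bag of `i`. -/
structure IsDTD {V ι : Type*} (r : V → V → Prop) (T : SimpleGraph ι)
    (bag : ι → Set V) : Prop where
  isTree : T.IsTree
  bag_subset_sources : ∀ i, bag i ⊆ {v | IsSource r v}
  bag_union : (⋃ i, bag i) = {v | IsSource r v}
  path_prop : ∀ (i j k : ι) (p : T.Walk j k), p.IsPath → i ∈ p.support →
    Reach r (bag j) ∩ Reach r (bag k) ⊆ Reach r (bag i)

/-- `j` belongs to the subtree of `T` (rooted at `ρ`) rooted at `i`: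
every path from the root `ρ` to `j` passes through `i`. -/
def InSubtree {ι : Type*} (T : SimpleGraph ι) (ρ i j : ι) : Prop :=
  ∀ p : T.Walk ρ j, p.IsPath → i ∈ p.support

/-- `i` is a child of `b` in the tree `T` rooted at `ρ`. -/
def IsChild {ι : Type*} (T : SimpleGraph ι) (ρ b i : ι) : Prop :=
  T.Adj b i ∧ InSubtree T ρ b i

/-- The down-closure of the node `i`: the union of all bags in the subtree rooted
at `i`. -/
def DownClosure {V ι : Type*} (T : SimpleGraph ι) (ρ : ι) (bag : ι → Set V)
    (i : ι) : Set V :=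
  ⋃ j ∈ {j | InSubtree T ρ i j}, bag j
open SimpleGraph

private lemma aux_end {ι : Type*} [DecidableEq ι] {T : SimpleGraph ι} {a c i : ι} {w : T.Walk a c}
    (hw : w.IsPath) (h : i ∈ w.support) (hc : c ∈ (w.takeUntil i h).support) : c = i := by
  classical
  by_contra hne
  have hnodup : ((w.takeUntil i h).append (w.dropUntil i h)).support.Nodup := by
    rw [w.take_spec h]; exact hw.support_nodup
  rw [Walk.support_append, List.nodup_append] at hnodup
  have hc2 : c ∈ (w.dropUntil i h).support.tail := by
    have hm := (w.dropUntil i h).end_mem_support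
    rw [(w.dropUntil i h).support_eq_cons] at hm
    rcases List.mem_cons.mp hm with h' | h'
    · exact absurd h' hne
    · exact h'
  exact hnodup.2.2 c hc c hc2 rfl

private lemma aux_mem_child {ι : Type*} {T : SimpleGraph ι} (ht : T.IsTree) {ρ b i x : ι}
    (hi : IsChild T ρ b i) (hx : InSubtree T ρ i x)
    (pbx : T.Walk b x) (hpbx : pbx.IsPath) : i ∈ pbx.support := by
  classical
  obtain ⟨w0⟩ := ht.isConnected.preconnected ρ b
  set q := w0.bypass with hq
  have hqp : q.IsPath := w0.bypass_isPath
  have hib : i ∈ (q.append pbx).bypass.support :=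
    hx _ ((q.append pbx).bypass_isPath)
  have := (q.append pbx).support_bypass_subset hib
  rw [Walk.mem_support_append_iff] at this
  rcases this with hiq | hipbx
  · exfalso
    have hb : b ∈ (q.takeUntil i hiq).support := hi.2 _ (hqp.takeUntil hiq)
    exact hi.1.ne (aux_end hqp hiq hb)
  · exact hipbx

private lemma aux_second {ι : Type*} {T : SimpleGraph ι} (ht : T.IsTree) {b i x : ι}
    (hadj : T.Adj b i) (pbx : T.Walk b x) (hp : pbx.IsPath) (hmem : i ∈ pbx.support) :
    ∃ t : T.Walk i x, pbx = Walk.cons hadj t := by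
  classical
  have h1 : pbx.takeUntil i hmem = Walk.cons hadj Walk.nil := by
    refine (ht.existsUnique_path b i).unique (hp.takeUntil hmem) ?_
    simp [Walk.cons_isPath_iff, hadj.ne]
  refine ⟨pbx.dropUntil i hmem, ?_⟩
  conv_lhs => rw [← pbx.take_spec hmem]
  rw [h1]
  simp

private lemma aux_key {ι : Type*} {T : SimpleGraph ι} (ht : T.IsTree) {ρ b i j x y : ι}
    (hi : IsChild T ρ b i) (hj : IsChild T ρ b j) (hij : i ≠ j)
    (hx : InSubtree T ρ i x) (hy : InSubtree T ρ j y) :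
    ∃ w : T.Walk x y, w.IsPath ∧ b ∈ w.support := by
  classical
  obtain ⟨w1⟩ := ht.isConnected.preconnected b x
  obtain ⟨w2⟩ := ht.isConnected.preconnected b y
  set pbx := w1.bypass with hpbxdef
  set pby := w2.bypass with hpbydef
  have hpbx : pbx.IsPath := w1.bypass_isPath
  have hpby : pby.IsPath := w2.bypass_isPath
  have hix : i ∈ pbx.support := aux_mem_child ht hi hx pbx hpbx
  have hjy : j ∈ pby.support := aux_mem_child ht hj hy pby hpby
  obtain ⟨t, htspec⟩ := aux_second ht hi.1 pbx hpbx hix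
  obtain ⟨s, hsspec⟩ := aux_second ht hj.1 pby hpby hjy
  have htp : t.IsPath ∧ b ∉ t.support := by
    rw [htspec, Walk.cons_isPath_iff] at hpbx; exact hpbx
  have hsp : s.IsPath ∧ b ∉ s.support := by
    rw [hsspec, Walk.cons_isPath_iff] at hpby; exact hpby
  have hpbx' : pbx.IsPath := w1.bypass_isPath
  have hpby' : pby.IsPath := w2.bypass_isPath
  have hdisj : ∀ z, z ∈ pbx.support → z ∈ pby.support → z = b := by
    intro z hz1 hz2
    by_contra hzb
    rw [htspec, Walk.support_cons] at hz1
    rw [hsspec, Walk.support_cons] at hz2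
    have hz1' : z ∈ t.support := (List.mem_cons.mp hz1).resolve_left hzb
    have hz2' : z ∈ s.support := (List.mem_cons.mp hz2).resolve_left hzb
    have hw1p : (Walk.cons hi.1 (t.takeUntil z hz1')).IsPath := by
      rw [Walk.cons_isPath_iff]
      exact ⟨htp.1.takeUntil hz1', fun hb => htp.2 (t.support_takeUntil_subset hz1' hb)⟩
    have hw2p : (Walk.cons hj.1 (s.takeUntil z hz2')).IsPath := by
      rw [Walk.cons_isPath_iff]
      exact ⟨hsp.1.takeUntil hz2', fun hb => hsp.2 (s.support_takeUntil_subset hz2' hb)⟩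
    have heq := (ht.existsUnique_path b z).unique hw1p hw2p
    have heq2 := congrArg (fun w => w.support.tail) heq
    simp only [Walk.support_cons, List.tail_cons] at heq2
    rw [Walk.support_eq_cons (t.takeUntil z hz1'),
      Walk.support_eq_cons (s.takeUntil z hz2')] at heq2
    simp only [List.cons.injEq] at heq2
    exact hij heq2.1
  have hbtail : b ∉ pby.support.tail := by
    have := hpby'.support_nodup
    rw [pby.support_eq_cons] at this
    exact (List.nodup_cons.mp this).1
  refine ⟨pbx.reverse.append pby, ?_, ?_⟩
  · rw [Walk.isPath_def, Walk.support_append, Walk.support_reverse]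
    refine List.Nodup.append (List.nodup_reverse.mpr hpbx'.support_nodup) ?_ ?_
    · have hn := hpby'.support_nodup
      rw [pby.support_eq_cons] at hn
      exact (List.nodup_cons.mp hn).2
    · intro z hz1 hz2
      have hz1' : z ∈ pbx.support := List.mem_reverse.mp hz1
      have hz2' : z ∈ pby.support := List.mem_of_mem_tail hz2
      exact hbtail ((hdisj z hz1' hz2') ▸ hz2)
  · rw [Walk.mem_support_append_iff]
    left
    rw [Walk.support_reverse, List.mem_reverse]
    exact pbx.start_mem_support

/-- In a dag tree decomposition of `r` rooted at `ρ`, if `i` and `j` are distinct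
children of a node `b`, then the vertex sets reachable from their down-closures
intersect only inside the set reachable from the bag of `b`. -/
theorem dtd_children_reach_inter {V ι : Type*} [Fintype V] [Fintype ι]
    (r : V → V → Prop) (hr : DigraphAcyclic r)
    (T : SimpleGraph ι) (bag : ι → Set V) (h : IsDTD r T bag)
    (ρ b i j : ι) (hi : IsChild T ρ b i) (hj : IsChild T ρ b j) (hij : i ≠ j) :
    Reach r (DownClosure T ρ bag i) ∩ Reach r (DownClosure T ρ bag j)
      ⊆ Reach r (bag b) := by
  rintro v ⟨⟨u1, hu1, hr1⟩, ⟨u2, hu2, hr2⟩⟩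
  simp only [DownClosure, Set.mem_iUnion, Set.mem_setOf_eq] at hu1 hu2
  obtain ⟨x, hx, hu1x⟩ := hu1
  obtain ⟨y, hy, hu2y⟩ := hu2
  obtain ⟨w, hw, hbw⟩ := aux_key h.isTree hi hj hij hx hy
  exact h.path_prop b x y w hw hbw ⟨⟨u1, hu1x, hr1⟩, ⟨u2, hu2y, hr2⟩⟩
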